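/- Let K be an algebraically closed field of characteristic zero and let n, k be positive integers with n ≥ 2k. Let R = K[x_{ia}, y_{ia} : i ∈ Fin n, a ∈ Fin k] be the polynomial ring in 2nk variables (the multivariate polynomial ring over the index type (Fin n × Fin k) ⊕ (Fin n × Fin k)). For a, b ∈ Fin k set f_{ab} = Σ_{i ∈ Fin n} x_{ia}·y_{ib}, and let B = Algebra.adjoin K {f_{ab} : a, b ∈ Fin k} be the K-subalgebra of R generated by these k² elements. Then R is a free B-module. -/

import Mathlib

open MvPolynomial

namespace MomentFreeAux

variable {n k : ℕ}

/-- Variable index type. -/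
abbrev V (n k : ℕ) := (Fin n × Fin k) ⊕ (Fin n × Fin k)

/-- Integer weights on the variables (shifted to be nonnegative). -/
def wt (n k : ℕ) : V n k → ℤ
  | .inl p => (4*(k:ℤ)^2+1) + (if (p.1:ℕ) < k then 1 - ((p.1:ℕ):ℤ)^2 - 2*((p.1:ℕ):ℤ)*((p.2:ℕ):ℤ)
       else if (p.1:ℕ) < 2*k then -2*(((p.1:ℕ):ℤ)-(k:ℤ))^2 + 4*(((p.1:ℕ):ℤ)-(k:ℤ))*((p.2:ℕ):ℤ) else 0)
  | .inr p => (4*(k:ℤ)^2+1) + (if (p.1:ℕ) < k then 2*((p.1:ℕ):ℤ)*((p.2:ℕ):ℤ)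
       else if (p.1:ℕ) < 2*k then -4*(((p.1:ℕ):ℤ)-(k:ℤ))*((p.2:ℕ):ℤ) else 0)

lemma wt_nonneg (x : V n k) : 0 ≤ wt n k x := by
  rcases x with ⟨i, a⟩ | ⟨i, b⟩
  · simp only [wt]
    have ha : ((a:ℕ):ℤ) ≤ (k:ℤ) - 1 := by have := a.2; push_cast; omega
    have ha0 : (0:ℤ) ≤ ((a:ℕ):ℤ) := Int.natCast_nonneg _
    split_ifs with h1 h2
    · have hi : ((i:ℕ):ℤ) ≤ (k:ℤ) - 1 := by push_cast; omega
      have hi0 : (0:ℤ) ≤ ((i:ℕ):ℤ) := Int.natCast_nonneg _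
      nlinarith
    · have hi : ((i:ℕ):ℤ) - k ≤ (k:ℤ) - 1 := by push_cast; omega
      have hi0 : (0:ℤ) ≤ ((i:ℕ):ℤ) - k := by push_cast; omega
      nlinarith
    · nlinarith
  · simp only [wt]
    have hb : ((b:ℕ):ℤ) ≤ (k:ℤ) - 1 := by have := b.2; push_cast; omega
    have hb0 : (0:ℤ) ≤ ((b:ℕ):ℤ) := Int.natCast_nonneg _
    split_ifs with h1 h2
    · have hi0 : (0:ℤ) ≤ ((i:ℕ):ℤ) := Int.natCast_nonneg _
      nlinarith
    · have hi : ((i:ℕ):ℤ) - k ≤ (k:ℤ) - 1 := by push_cast; omega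
      have hi0 : (0:ℤ) ≤ ((i:ℕ):ℤ) - k := by push_cast; omega
      nlinarith
    · nlinarith

/-- The designated row for the pair `(a,b)`. -/
def sig (hs : 2*k ≤ n) (a b : Fin k) : Fin n :=
  ⟨if (a:ℕ) ≤ b then (b:ℕ) - a else k + ((a:ℕ) - b), by
    have hb := b.2; have haa := a.2
    split_ifs <;> omega⟩

lemma sig_val (hs : 2*k ≤ n) (a b : Fin k) :
    ((sig hs a b : Fin n) : ℕ) = if (a:ℕ) ≤ b then (b:ℕ) - a else k + ((a:ℕ) - b) := rfl

lemma sig_inj_right (hs : 2*k ≤ n) (a : Fin k) {b b' : Fin k}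
    (h : sig hs a b = sig hs a b') : b = b' := by
  have hb := b.2; have hb' := b'.2; have haa := a.2
  have h2 := congrArg Fin.val h
  rw [sig_val, sig_val] at h2
  split_ifs at h2 <;> (apply Fin.ext; omega)

lemma sig_inj_left (hs : 2*k ≤ n) (b : Fin k) {a a' : Fin k}
    (h : sig hs a b = sig hs a' b) : a = a' := by
  have hb := b.2; have ha := a.2; have ha' := a'.2
  have h2 := congrArg Fin.val h
  rw [sig_val, sig_val] at h2
  split_ifs at h2 <;> (apply Fin.ext; omega)

set_option maxHeartbeats 1000000 in
/-- The key inequality: the designated monomial of `f a b` has strictly maximal weight. -/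
lemma key (hs : 2*k ≤ n) (a b : Fin k) (i : Fin n) (h : i ≠ sig hs a b) :
    wt n k (.inl (i,a)) + wt n k (.inr (i,b)) <
      wt n k (.inl (sig hs a b, a)) + wt n k (.inr (sig hs a b, b)) := by
  have hb := b.2; have ha := a.2; have hii := i.2
  have hne : (i:ℕ) ≠ (sig hs a b : ℕ) := fun hc => h (Fin.ext hc)
  rw [sig_val] at hne
  simp only [wt, sig_val]
  rcases le_or_gt (a:ℕ) b with hab | hab
  · -- designated row is b - a, in block 1
    rw [if_pos hab] at hne
    simp only [if_pos hab]
    have h1 : ((b:ℕ) - (a:ℕ) : ℕ) < k := by omega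
    simp only [if_pos h1]
    have hcast : (((b:ℕ) - (a:ℕ) : ℕ) : ℤ) = ((b:ℕ):ℤ) - ((a:ℕ):ℤ) := by push_cast; omega
    rw [hcast]
    set A := ((a:ℕ):ℤ) with hA; set B := ((b:ℕ):ℤ) with hB
    have hAB : A ≤ B := by rw [hA, hB]; exact_mod_cast hab
    have hA0 : 0 ≤ A := Int.natCast_nonneg _
    split_ifs with h2 h3
    · -- competitor in block 1
      set t := ((i:ℕ):ℤ) with hT
      have ht0 : 0 ≤ t := Int.natCast_nonneg _
      have htne : t ≠ B - A := by rw [hT, hA, hB]; intro hc; apply hne; omega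
      have h5 : 1 ≤ (t - (B - A))^2 := by
        rcases lt_or_gt_of_ne htne with h | h <;> nlinarith
      nlinarith
    · -- competitor in block 2
      set t := ((i:ℕ):ℤ) - (k:ℤ) with hT
      have ht0 : 0 ≤ t := by rw [hT]; push_cast; omega
      have hB0 : 0 ≤ B := Int.natCast_nonneg _
      nlinarith
    · -- extra rows
      nlinarith
  · -- designated row is k + (a - b), in block 2
    rw [if_neg (by omega)] at hne
    simp only [if_neg (show ¬ ((a:ℕ) ≤ b) by omega)]
    have h1 : ¬ (k + ((a:ℕ) - (b:ℕ)) < k) := by omega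
    have h2 : k + ((a:ℕ) - (b:ℕ)) < 2*k := by omega
    simp only [if_neg h1, if_pos h2]
    have hcast : ((k + ((a:ℕ) - (b:ℕ)) : ℕ) : ℤ) - (k:ℤ) = ((a:ℕ):ℤ) - ((b:ℕ):ℤ) := by
      push_cast; omega
    rw [hcast]
    set A := ((a:ℕ):ℤ) with hA; set B := ((b:ℕ):ℤ) with hB
    have hAB : B + 1 ≤ A := by rw [hA, hB]; push_cast; omega
    have hB0 : 0 ≤ B := Int.natCast_nonneg _
    split_ifs with h3 h4
    · -- competitor in block 1
      set t := ((i:ℕ):ℤ) with hT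
      have ht0 : 0 ≤ t := Int.natCast_nonneg _
      nlinarith
    · -- competitor in block 2
      set t := ((i:ℕ):ℤ) - (k:ℤ) with hT
      have ht0 : 0 ≤ t := by rw [hT]; push_cast; omega
      have htne : t ≠ A - B := by rw [hT, hA, hB]; intro hc; apply hne; omega
      have h5 : 1 ≤ (t - (A - B))^2 := by
        rcases lt_or_gt_of_ne htne with h | h <;> nlinarith
      nlinarith
    · -- extra rows
      nlinarith



/-! ### Polynomial-level machinery -/

variable (K : Type*) [Field K]

/-- Exponent vectors. -/
abbrev D (n k : ℕ) := V n k →₀ ℕ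

/-- Exponents for powers of the `f`'s. -/
abbrev Cc (k : ℕ) := (Fin k × Fin k) →₀ ℕ

/-- Weight of an exponent vector. -/
def wtD (n k : ℕ) (d : D n k) : ℤ := d.sum fun x e => (e:ℤ) * wt n k x

lemma wtD_add (d d' : D n k) : wtD n k (d + d') = wtD n k d + wtD n k d' := by
  classical
  apply Finsupp.sum_add_index <;> intros <;> push_cast <;> ring

lemma wtD_single (x : V n k) (e : ℕ) : wtD n k (Finsupp.single x e) = (e:ℤ) * wt n k x := by
  apply Finsupp.sum_single_index; simp

lemma wtD_nonneg (d : D n k) : 0 ≤ wtD n k d := by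
  apply Finset.sum_nonneg
  intro x _
  have := wt_nonneg (n := n) (k := k) x
  positivity

lemma wtD_smul (m : ℕ) (d : D n k) : wtD n k (m • d) = (m:ℤ) * wtD n k d := by
  induction m with
  | zero => simp [wtD]
  | succ m ih => rw [succ_nsmul, wtD_add, ih]; push_cast; ring

/-- Degree of an exponent vector. -/
def degD (d : D n k) : ℕ := d.sum fun _ e => e

lemma degD_add (d d' : D n k) : degD (d + d') = degD d + degD d' := by
  classical
  apply Finsupp.sum_add_index <;> intros <;> rfl

lemma degD_single (x : V n k) (e : ℕ) : degD (Finsupp.single x e) = e := by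
  apply Finsupp.sum_single_index; rfl

/-- The exponent of the `i`-th monomial of `f a b`. -/
noncomputable def eExp (i : Fin n) (a b : Fin k) : D n k :=
  Finsupp.single (.inl (i,a)) 1 + Finsupp.single (.inr (i,b)) 1

/-- The leading exponent of `f a b`. -/
noncomputable def mExp (hs : 2*k ≤ n) (a b : Fin k) : D n k := eExp (sig hs a b) a b

lemma wtD_eExp (i : Fin n) (a b : Fin k) :
    wtD n k (eExp i a b) = wt n k (.inl (i,a)) + wt n k (.inr (i,b)) := by
  rw [eExp, wtD_add, wtD_single, wtD_single]; push_cast; ring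

lemma key' (hs : 2*k ≤ n) (a b : Fin k) (i : Fin n) (h : i ≠ sig hs a b) :
    wtD n k (eExp i a b) < wtD n k (mExp hs a b) := by
  rw [wtD_eExp, mExp, wtD_eExp]
  exact key hs a b i h

/-- The moment map component. -/
noncomputable def fP (n k : ℕ) (a b : Fin k) : MvPolynomial (V n k) K :=
  ∑ i : Fin n, X (.inl (i,a)) * X (.inr (i,b))

lemma X_eq_monomial (p : V n k) : (X p : MvPolynomial (V n k) K) = monomial (Finsupp.single p 1) 1 := by
  rw [← X_pow_eq_monomial, pow_one]

lemma fP_eq (a b : Fin k) :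
    fP K n k a b = ∑ i : Fin n, monomial (eExp i a b) (1:K) := by
  unfold fP eExp
  congr 1; funext i
  rw [X_eq_monomial, X_eq_monomial, monomial_mul, mul_one]

lemma fP_decomp (hs : 2*k ≤ n) (a b : Fin k) :
    fP K n k a b = monomial (mExp hs a b) (1:K)
      + ∑ i ∈ Finset.univ.erase (sig hs a b), monomial (eExp i a b) (1:K) := by
  classical
  rw [fP_eq, ← Finset.add_sum_erase _ _ (Finset.mem_univ (sig hs a b))]
  rfl

/-- `p` has unique weight-leading monomial `d0`, with coefficient 1. -/
def IsLead (p : MvPolynomial (V n k) K) (d0 : D n k) : Prop :=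
  ∃ q, p = monomial d0 1 + q ∧ ∀ d ∈ q.support, wtD n k d < wtD n k d0

lemma isLead_monomial (d0 : D n k) : IsLead K (monomial d0 (1:K)) d0 :=
  ⟨0, by simp, by simp⟩

lemma isLead_one : IsLead K (1 : MvPolynomial (V n k) K) 0 := by
  have := isLead_monomial K (0 : D n k)
  rwa [monomial_zero', MvPolynomial.C_1] at this

lemma isLead_fP (hs : 2*k ≤ n) (a b : Fin k) :
    IsLead K (fP K n k a b) (mExp hs a b) := by
  classical
  refine ⟨_, fP_decomp K hs a b, ?_⟩
  intro d hd
  have h2 := MvPolynomial.support_sum hd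
  rw [Finset.mem_biUnion] at h2
  obtain ⟨i, hi, hdi⟩ := h2
  rw [support_monomial, if_neg (one_ne_zero)] at hdi
  rw [Finset.mem_singleton] at hdi
  subst hdi
  exact key' hs a b i (Finset.ne_of_mem_erase hi)

lemma isLead_mul {p p' : MvPolynomial (V n k) K} {d0 d0' : D n k}
    (h : IsLead K p d0) (h' : IsLead K p' d0') : IsLead K (p * p') (d0 + d0') := by
  classical
  obtain ⟨q, rfl, hq⟩ := h
  obtain ⟨q', rfl, hq'⟩ := h'
  refine ⟨monomial d0 1 * q' + q * monomial d0' 1 + q * q', by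
    have hm : (monomial d0 (1:K)) * monomial d0' 1 = monomial (d0+d0') 1 := by
      rw [monomial_mul, one_mul]
    rw [← hm]; ring, ?_⟩
  intro d hd
  have hle : ∀ dd ∈ (monomial d0 (1:K)).support, wtD n k dd ≤ wtD n k d0 := by
    intro dd hdd
    rw [support_monomial, if_neg one_ne_zero, Finset.mem_singleton] at hdd
    subst hdd; rfl
  have hle' : ∀ dd ∈ (monomial d0' (1:K)).support, wtD n k dd ≤ wtD n k d0' := by
    intro dd hdd
    rw [support_monomial, if_neg one_ne_zero, Finset.mem_singleton] at hdd
    subst hdd; rfl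
  have key3 : ∀ (r r' : MvPolynomial (V n k) K) (W W' : ℤ),
      (∀ dd ∈ r.support, wtD n k dd ≤ W) → (∀ dd ∈ r'.support, wtD n k dd < W') →
      ∀ dd ∈ (r * r').support, wtD n k dd < W + W' := by
    intro r r' W W' hr hr' dd hdd
    obtain ⟨y, hy, z, hz, hyz⟩ := Finset.mem_add.mp (MvPolynomial.support_mul _ _ hdd)
    subst hyz
    rw [wtD_add]
    exact add_lt_add_of_le_of_lt (hr y hy) (hr' z hz)
  rw [wtD_add]
  rcases Finset.mem_union.mp (MvPolynomial.support_add hd) with hd1 | hd1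
  · rcases Finset.mem_union.mp (MvPolynomial.support_add hd1) with hd2 | hd2
    · exact key3 _ _ _ _ hle hq' d hd2
    · have h4 := key3 _ _ _ _ hle' hq d (by rwa [mul_comm] at hd2)
      linarith
  · exact key3 q q' _ _ (fun dd hdd => le_of_lt (hq dd hdd)) hq' d hd1

lemma isLead_pow {p : MvPolynomial (V n k) K} {d0 : D n k} (h : IsLead K p d0) (m : ℕ) :
    IsLead K (p ^ m) (m • d0) := by
  induction m with
  | zero => rw [pow_zero, zero_smul]; exact isLead_one K
  | succ m ih =>
      rw [pow_succ, succ_nsmul]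
      exact isLead_mul K ih h



/-! ### Products of the `f`'s -/

/-- The product `F^c` of powers of the `f`'s. -/
noncomputable def Fc (n k : ℕ) (c : Cc k) : MvPolynomial (V n k) K :=
  c.prod fun ab e => fP K n k ab.1 ab.2 ^ e

/-- The leading exponent of `F^c`. -/
noncomputable def cExp (hs : 2*k ≤ n) (c : Cc k) : D n k :=
  c.sum fun ab e => e • mExp hs ab.1 ab.2

lemma Fc_zero : Fc K n k 0 = 1 := Finsupp.prod_zero_index

lemma Fc_add (c c' : Cc k) : Fc K n k (c + c') = Fc K n k c * Fc K n k c' := by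
  classical
  apply Finsupp.prod_add_index
  · intro a _; exact pow_zero _
  · intro a _ b₁ b₂; exact pow_add _ _ _

lemma Fc_single (ab : Fin k × Fin k) (e : ℕ) :
    Fc K n k (Finsupp.single ab e) = fP K n k ab.1 ab.2 ^ e := by
  apply Finsupp.prod_single_index; exact pow_zero _

lemma cExp_zero (hs : 2*k ≤ n) : cExp hs c = 0 → True := fun _ => trivial

lemma cExp_zero' (hs : 2*k ≤ n) : cExp (n := n) hs 0 = 0 := by
  simp [cExp]

lemma cExp_add (hs : 2*k ≤ n) (c c' : Cc k) :
    cExp hs (c + c') = cExp hs c + cExp hs c' := by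
  classical
  apply Finsupp.sum_add_index
  · intro a _; exact zero_smul _ _
  · intro a _ b₁ b₂; exact add_smul _ _ _

lemma cExp_single (hs : 2*k ≤ n) (ab : Fin k × Fin k) (e : ℕ) :
    cExp hs (Finsupp.single ab e) = e • mExp hs ab.1 ab.2 := by
  apply Finsupp.sum_single_index; exact zero_smul _ _

lemma isLead_Fc (hs : 2*k ≤ n) (c : Cc k) :
    IsLead K (Fc K n k c) (cExp hs c) := by
  induction c using Finsupp.induction_linear with
  | zero => rw [Fc_zero, cExp_zero']; exact isLead_one K
  | add f g hf hg =>
      rw [Fc_add, cExp_add]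
      exact isLead_mul K hf hg
  | single ab e =>
      rw [Fc_single, cExp_single]
      exact isLead_pow K (isLead_fP K hs ab.1 ab.2) e

/-! ### Good exponents and injectivity of leading exponents -/

/-- An exponent vector is *good* if it is divisible by no leading monomial `m_{ab}`. -/
def Good (hs : 2*k ≤ n) (e : D n k) : Prop :=
  ∀ a b : Fin k, e (.inl (sig hs a b, a)) = 0 ∨ e (.inr (sig hs a b, b)) = 0

lemma mExp_apply_inl (hs : 2*k ≤ n) (a b a' b' : Fin k) :
    mExp hs a' b' (.inl (sig hs a b, a)) = if (a', b') = (a, b) then 1 else 0 := by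
  classical
  by_cases h : (a', b') = (a, b)
  · rw [if_pos h]
    rw [Prod.mk.injEq] at h
    obtain ⟨rfl, rfl⟩ := h
    simp [mExp, eExp, Finsupp.add_apply, Finsupp.single_apply]
  · rw [if_neg h]
    have hne : (Sum.inl (sig hs a' b', a') : V n k) ≠ Sum.inl (sig hs a b, a) := by
      intro hc
      injection hc with hc
      rw [Prod.mk.injEq] at hc
      obtain ⟨h1, rfl⟩ := hc
      exact h (by rw [Prod.mk.injEq]; exact ⟨rfl, sig_inj_right hs _ h1⟩)
    simp [mExp, eExp, Finsupp.add_apply, Finsupp.single_apply, hne]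

lemma mExp_apply_inr (hs : 2*k ≤ n) (a b a' b' : Fin k) :
    mExp hs a' b' (.inr (sig hs a b, b)) = if (a', b') = (a, b) then 1 else 0 := by
  classical
  by_cases h : (a', b') = (a, b)
  · rw [if_pos h]
    rw [Prod.mk.injEq] at h
    obtain ⟨rfl, rfl⟩ := h
    simp [mExp, eExp, Finsupp.add_apply, Finsupp.single_apply]
  · rw [if_neg h]
    have hne : (Sum.inr (sig hs a' b', b') : V n k) ≠ Sum.inr (sig hs a b, b) := by
      intro hc
      injection hc with hc
      rw [Prod.mk.injEq] at hc
      obtain ⟨h1, rfl⟩ := hc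
      exact h (by rw [Prod.mk.injEq]; exact ⟨sig_inj_left hs _ h1, rfl⟩)
    simp [mExp, eExp, Finsupp.add_apply, Finsupp.single_apply, hne]

lemma cExp_apply_inl (hs : 2*k ≤ n) (c : Cc k) (a b : Fin k) :
    cExp hs c (.inl (sig hs a b, a)) = c (a, b) := by
  classical
  induction c using Finsupp.induction_linear with
  | zero => simp [cExp_zero']
  | add f g hf hg => rw [cExp_add]; simp [Finsupp.add_apply, hf, hg]
  | single ab e =>
      rw [cExp_single, Finsupp.smul_apply, mExp_apply_inl, Finsupp.single_apply]
      by_cases h : ab = (a, b)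
      · subst h; simp
      · rw [if_neg h, if_neg (by simpa using h), smul_zero]

lemma cExp_apply_inr (hs : 2*k ≤ n) (c : Cc k) (a b : Fin k) :
    cExp hs c (.inr (sig hs a b, b)) = c (a, b) := by
  classical
  induction c using Finsupp.induction_linear with
  | zero => simp [cExp_zero']
  | add f g hf hg => rw [cExp_add]; simp [Finsupp.add_apply, hf, hg]
  | single ab e =>
      rw [cExp_single, Finsupp.smul_apply, mExp_apply_inr, Finsupp.single_apply]
      by_cases h : ab = (a, b)
      · subst h; simp
      · rw [if_neg h, if_neg (by simpa using h), smul_zero]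

lemma dInj (hs : 2*k ≤ n) {c c' : Cc k} {e e' : D n k} (he : Good hs e) (he' : Good hs e')
    (h : cExp hs c + e = cExp hs c' + e') : c = c' ∧ e = e' := by
  have hc : c = c' := by
    ext ab
    obtain ⟨a, b⟩ := ab
    have h1 := DFunLike.congr_fun h (Sum.inl (sig hs a b, a) : V n k)
    have h2 := DFunLike.congr_fun h (Sum.inr (sig hs a b, b) : V n k)
    simp only [Finsupp.add_apply, cExp_apply_inl, cExp_apply_inr] at h1 h2
    rcases he a b with h3 | h3 <;> rcases he' a b with h4 | h4 <;> omega
  subst hc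
  exact ⟨rfl, add_left_cancel h⟩



/-! ### K-linear independence of the products -/

/-- The family of products `F^c · x^e` with `e` good. -/
noncomputable def PFam (hs : 2*k ≤ n) (p : Cc k × {e : D n k // Good hs e}) :
    MvPolynomial (V n k) K :=
  Fc K n k p.1 * monomial p.2.1 1

/-- Its leading exponents. -/
noncomputable def dI (hs : 2*k ≤ n) (p : Cc k × {e : D n k // Good hs e}) : D n k :=
  cExp hs p.1 + p.2.1

lemma dI_inj (hs : 2*k ≤ n) : Function.Injective (dI (n := n) (k := k) hs) := by
  intro p q h
  obtain ⟨h1, h2⟩ := dInj hs p.2.2 q.2.2 h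
  exact Prod.ext_iff.mpr ⟨h1, Subtype.ext h2⟩

lemma isLead_PFam (hs : 2*k ≤ n) (p : Cc k × {e : D n k // Good hs e}) :
    IsLead K (PFam K hs p) (dI hs p) :=
  isLead_mul K (isLead_Fc K hs _) (isLead_monomial K _)

lemma coeff_isLead_self {p : MvPolynomial (V n k) K} {d0 : D n k} (h : IsLead K p d0) :
    coeff d0 p = 1 := by
  classical
  obtain ⟨q, rfl, hq⟩ := h
  rw [coeff_add, coeff_monomial, if_pos rfl]
  have h2 : coeff d0 q = 0 := by
    by_contra hne
    exact absurd (hq d0 (mem_support_iff.mpr hne)) (lt_irrefl _)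
  rw [h2, add_zero]

lemma coeff_isLead_ne {p : MvPolynomial (V n k) K} {d0 d : D n k} (h : IsLead K p d0)
    (hne : d ≠ d0) (hw : wtD n k d0 ≤ wtD n k d) : coeff d p = 0 := by
  classical
  obtain ⟨q, rfl, hq⟩ := h
  rw [coeff_add, coeff_monomial, if_neg (fun hc => hne hc.symm)]
  have h2 : coeff d q = 0 := by
    by_contra hne2
    have := hq d (mem_support_iff.mpr hne2)
    linarith
  rw [h2, zero_add]

lemma liK_aux (hs : 2*k ≤ n) (N : ℕ) :
    ∀ (s : Finset (Cc k × {e : D n k // Good hs e})) (g : _ → K), s.card ≤ N →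
      (∑ i ∈ s, g i • PFam K hs i) = 0 → ∀ i ∈ s, g i = 0 := by
  classical
  induction N with
  | zero =>
      intro s g hc _ i hi
      rw [Nat.le_zero, Finset.card_eq_zero] at hc
      subst hc; exact absurd hi (Finset.notMem_empty i)
  | succ N ih =>
      intro s g hc hrel i hi
      obtain ⟨i0, hi0, hmax⟩ := Finset.exists_max_image s (fun j => wtD n k (dI hs j)) ⟨i, hi⟩
      have h0 : g i0 = 0 := by
        have hco := congrArg (coeff (dI hs i0)) hrel
        rw [MvPolynomial.coeff_sum, coeff_zero] at hco
        rw [Finset.sum_eq_single i0] at hco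
        · rw [coeff_smul, coeff_isLead_self K (isLead_PFam K hs i0), smul_eq_mul, mul_one] at hco
          exact hco
        · intro j hj hjne
          rw [coeff_smul,
            coeff_isLead_ne K (isLead_PFam K hs j)
              (fun hc => hjne (dI_inj hs hc.symm)) (hmax j hj), smul_zero]
        · intro hcon; exact absurd hi0 hcon
      have hrel' : ∑ j ∈ s.erase i0, g j • PFam K hs j = 0 := by
        rw [← Finset.add_sum_erase _ _ hi0, h0, zero_smul, zero_add] at hrel
        exact hrel
      rcases eq_or_ne i i0 with rfl | hne
      · exact h0
      · exact ih (s.erase i0) g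
          (by have := Finset.card_erase_of_mem hi0; omega) hrel'
          i (Finset.mem_erase.mpr ⟨hne, hi⟩)

lemma liK (hs : 2*k ≤ n) :
    LinearIndependent K (PFam K (n := n) (k := k) hs) := by
  rw [linearIndependent_iff']
  intro s g hrel i hi
  exact liK_aux K hs s.card s g le_rfl hrel i hi



/-! ### Spanning -/

/-- The generating set from the theorem statement. -/
def Sgen (n k : ℕ) : Set (MvPolynomial (V n k) K) :=
  {p | ∃ a b : Fin k, p = ∑ i : Fin n, X (Sum.inl (i, a)) * X (Sum.inr (i, b))}

lemma fP_mem_Sgen (a b : Fin k) : fP K n k a b ∈ Sgen K n k := ⟨a, b, rfl⟩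

/-- The candidate basis family: good monomials. -/
noncomputable def bFam (hs : 2*k ≤ n) (e : {e : D n k // Good hs e}) :
    MvPolynomial (V n k) K :=
  monomial e.1 1

lemma degD_mExp (hs : 2*k ≤ n) (a b : Fin k) : degD (mExp hs a b) = 2 := by
  rw [mExp, eExp, degD_add, degD_single, degD_single]

lemma mExp_le (hs : 2*k ≤ n) {a b : Fin k} {d : D n k}
    (h1 : d (.inl (sig hs a b, a)) ≠ 0) (h2 : d (.inr (sig hs a b, b)) ≠ 0) :
    mExp hs a b ≤ d := by
  classical
  rw [Finsupp.le_def]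
  intro x
  rw [mExp, eExp, Finsupp.add_apply, Finsupp.single_apply, Finsupp.single_apply]
  split_ifs with hu hv hv
  · exact absurd (hu.trans hv.symm) (by simp)
  · subst hu; omega
  · subst hv; omega
  · omega

lemma monomial_mem_span (hs : 2*k ≤ n) :
    ∀ (N : ℕ) (d : D n k), degD d + (wtD n k d).toNat ≤ N →
      monomial d (1:K) ∈ Submodule.span (Algebra.adjoin K (Sgen K n k))
        (Set.range (bFam K hs)) := by
  classical
  intro N
  induction N using Nat.strong_induction_on with
  | _ N ih =>
    intro d hN
    by_cases hg : Good hs d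
    · exact Submodule.subset_span ⟨⟨d, hg⟩, rfl⟩
    · rw [Good] at hg
      push_neg at hg
      obtain ⟨a, b, h1, h2⟩ := hg
      have hle := mExp_le hs h1 h2
      set d' := d - mExp hs a b with hd'
      have hsum : mExp hs a b + d' = d := by
        rw [hd', add_comm]
        exact tsub_add_cancel_of_le hle
      have hdeg : degD d = 2 + degD d' := by
        rw [← hsum, degD_add, degD_mExp]
      have hwt : wtD n k d = wtD n k (mExp hs a b) + wtD n k d' := by
        rw [← hsum, wtD_add]
      have hmm : (monomial (mExp hs a b) (1:K)) * monomial d' 1 = monomial d 1 := by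
        rw [monomial_mul, one_mul, hsum]
      have hdecomp : monomial d (1:K) =
          fP K n k a b * monomial d' 1
          - ∑ i ∈ Finset.univ.erase (sig hs a b), monomial (eExp i a b + d') (1:K) := by
        rw [fP_decomp K hs a b, add_mul, hmm, Finset.sum_mul]
        have : ∀ i ∈ Finset.univ.erase (sig hs a b),
            monomial (eExp i a b) (1:K) * monomial d' 1 = monomial (eExp i a b + d') 1 := by
          intro i _; rw [monomial_mul, one_mul]
        rw [Finset.sum_congr rfl this]
        ring
      rw [hdecomp]
      apply Submodule.sub_mem
      · have hd'mem : monomial d' (1:K) ∈ Submodule.span (Algebra.adjoin K (Sgen K n k))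
            (Set.range (bFam K hs)) := by
          apply ih (degD d' + (wtD n k d').toNat)
          · have h3 := wtD_nonneg (n := n) (k := k) d'
            have h4 := wtD_nonneg (n := n) (k := k) (mExp hs a b)
            have h5 : (wtD n k d').toNat ≤ (wtD n k d).toNat := by omega
            omega
          · exact le_rfl
        have := Submodule.smul_mem _ (⟨fP K n k a b, Algebra.subset_adjoin (fP_mem_Sgen K a b)⟩ :
          Algebra.adjoin K (Sgen K n k)) hd'mem
        exact this
      · apply Submodule.sum_mem
        intro i hi
        have hkey := key' hs a b i (Finset.ne_of_mem_erase hi)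
        have hdegi : degD (eExp i a b + d') = degD d := by
          rw [degD_add, hdeg, eExp, degD_add, degD_single, degD_single]
        have hwti : wtD n k (eExp i a b + d') < wtD n k d := by
          rw [wtD_add, hwt, mExp] at *
          omega
        apply ih (degD d + (wtD n k d).toNat - 1)
        · omega
        · have h3 := wtD_nonneg (n := n) (k := k) (eExp i a b + d')
          have h4 : 0 < wtD n k d := by omega
          have h5 := (Int.toNat_lt_toNat h4).mpr hwti
          omega

lemma span_top (hs : 2*k ≤ n) :
    ⊤ ≤ Submodule.span (Algebra.adjoin K (Sgen K n k)) (Set.range (bFam K hs)) := by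
  classical
  intro p _
  rw [← support_sum_monomial_coeff p]
  apply Submodule.sum_mem
  intro d _
  have h1 : (monomial d) (coeff d p) =
      (⟨C (coeff d p), Subalgebra.algebraMap_mem _ _⟩ : Algebra.adjoin K (Sgen K n k)) •
        monomial d (1:K) := by
    show (monomial d) (coeff d p) = C (coeff d p) * monomial d 1
    rw [C_mul_monomial, mul_one]
  rw [h1]
  exact Submodule.smul_mem _ _
    (monomial_mem_span K hs (degD d + (wtD n k d).toNat) d le_rfl)



/-! ### Linear independence over the subalgebra, and the final assembly -/

lemma mem_closure_iff (x : MvPolynomial (V n k) K) :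
    x ∈ Submonoid.closure (Sgen K n k) ↔ ∃ c : Cc k, Fc K n k c = x := by
  constructor
  · intro hx
    induction hx using Submonoid.closure_induction with
    | mem y hy =>
        obtain ⟨a, b, rfl⟩ := hy
        exact ⟨Finsupp.single (a, b) 1, by rw [Fc_single, pow_one]; rfl⟩
    | one => exact ⟨0, Fc_zero K⟩
    | mul x y hx hy ihx ihy =>
        obtain ⟨c, rfl⟩ := ihx
        obtain ⟨c', rfl⟩ := ihy
        exact ⟨c + c', Fc_add K c c'⟩
  · rintro ⟨c, rfl⟩
    apply Submonoid.prod_mem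
    intro ab _
    exact pow_mem (Submonoid.subset_closure (fP_mem_Sgen K ab.1 ab.2)) _

lemma exists_repr (x : MvPolynomial (V n k) K) (hx : x ∈ Algebra.adjoin K (Sgen K n k)) :
    ∃ μ : Cc k →₀ K, (μ.sum fun c t => t • Fc K n k c) = x := by
  have h1 : x ∈ Submodule.span K (Submonoid.closure (Sgen K n k) : Set _) := by
    rw [← Algebra.adjoin_eq_span]
    exact hx
  have h2 : (Submonoid.closure (Sgen K n k) : Set _) = Set.range (Fc K n k) := by
    ext y
    rw [SetLike.mem_coe, mem_closure_iff]
    exact ⟨fun ⟨c, hc⟩ => ⟨c, hc⟩, fun ⟨c, hc⟩ => ⟨c, hc⟩⟩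
  rw [h2] at h1
  exact Finsupp.mem_span_range_iff_exists_finsupp.mp h1

lemma liB (hs : 2*k ≤ n) :
    LinearIndependent (Algebra.adjoin K (Sgen K n k)) (bFam K hs) := by
  classical
  rw [linearIndependent_iff']
  intro s g hrel e he
  choose μ hμ using fun e' : {e : D n k // Good hs e} =>
    exists_repr K ((g e' : MvPolynomial (V n k) K)) (g e').2
  set T := s.biUnion (fun e' => (μ e').support.image fun c => (c, e')) with hT
  have hdisj : (↑s : Set {e : D n k // Good hs e}).PairwiseDisjoint
      (fun e' => (μ e').support.image fun c => (c, e')) := by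
    intro e1 _ e2 _ hne
    refine Finset.disjoint_left.mpr ?_
    rintro p hp1 hp2
    simp only [Finset.mem_image] at hp1 hp2
    obtain ⟨c1, _, rfl⟩ := hp1
    obtain ⟨c2, _, hc⟩ := hp2
    exact hne (((Prod.mk.injEq _ _ _ _).mp hc).2.symm ▸ rfl)
  have hsum : ∑ p ∈ T, (μ p.2 p.1) • PFam K hs p
      = ∑ e' ∈ s, (g e' : MvPolynomial (V n k) K) * monomial e'.1 1 := by
    rw [hT, Finset.sum_biUnion hdisj]
    apply Finset.sum_congr rfl
    intro e' _
    rw [Finset.sum_image (by intro x _ y _ h; exact ((Prod.mk.injEq _ _ _ _).mp h).1)]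
    rw [← hμ e', Finsupp.sum, Finset.sum_mul]
    apply Finset.sum_congr rfl
    intro c _
    rw [smul_mul_assoc]
    rfl
  have hzero : ∑ p ∈ T, (μ p.2 p.1) • PFam K hs p = 0 := by
    rw [hsum, ← hrel]
    apply Finset.sum_congr rfl
    intro e' _
    rfl
  have hall := liK_aux K hs T.card T _ le_rfl hzero
  have hge : (g e : MvPolynomial (V n k) K) = 0 := by
    rw [← hμ e, Finsupp.sum]
    apply Finset.sum_eq_zero
    intro c hc
    have hmem : (c, e) ∈ T :=
      Finset.mem_biUnion.mpr ⟨e, he, Finset.mem_image.mpr ⟨c, hc, rfl⟩⟩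
    rw [hall (c, e) hmem, zero_smul]
  exact Subtype.ext hge

end MomentFreeAux

open MomentFreeAux in
/-- For the dual pair `(gl_n, gl_k)` in the stable range `n ≥ 2k`, the
polynomial ring `R = K[x_{ia}, y_{ia}]` is a free module over the subalgebra generated by
the moment map components `f_{ab} = Σ_i x_{ia} y_{ib}`. -/
theorem free_over_moment_map_subalgebra_gl
    (K : Type*) [Field K] [IsAlgClosed K] [CharZero K]
    (n k : ℕ) (hn : 0 < n) (hk : 0 < k) (hstable : 2 * k ≤ n) :
    Module.Free
      (Algebra.adjoin K
        {p : MvPolynomial ((Fin n × Fin k) ⊕ (Fin n × Fin k)) K |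
          ∃ a b : Fin k, p = ∑ i : Fin n, X (Sum.inl (i, a)) * X (Sum.inr (i, b))})
      (MvPolynomial ((Fin n × Fin k) ⊕ (Fin n × Fin k)) K) := by
  exact Module.Free.of_basis (Module.Basis.mk (liB K hstable) (span_top K hstable))
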